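/- For every natural number n ≥ 1, ∑_{j=1}^n (-1)^{j-1} j (n!)² / ((n-j)!(n+j)!) = n / (2(2n-1)). -/

import Mathlib

noncomputable def G (n k : ℕ) : ℚ :=
  (-1) ^ k * ((n : ℚ) + (k : ℚ) * (2 * (n : ℚ) - 1) - 2 * (k : ℚ) ^ 2) /
    (2 * (2 * (n : ℚ) - 1)) * ((n.factorial : ℚ)) ^ 2 /
    (((n - k).factorial : ℚ) * ((n + k).factorial : ℚ))

lemma key (n : ℕ) (hn : 1 ≤ n) : ∀ k, k ≤ n →
    (∑ j ∈ Finset.Icc 1 k, (-1 : ℚ) ^ (j - 1) * (j : ℚ) *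
      ((n.factorial : ℚ)) ^ 2 / (((n - j).factorial : ℚ) * ((n + j).factorial : ℚ))) =
      G n 0 - G n k := by
  intro k
  induction k with
  | zero => simp
  | succ k ih =>
    intro hk
    have hk' : k ≤ n := Nat.le_of_succ_le hk
    rw [Finset.sum_Icc_succ_top (Nat.le_add_left 1 k), ih hk']
    have h1 : n - k = (n - (k + 1)) + 1 := by omega
    have h2 : n + (k + 1) = (n + k) + 1 := by omega
    have hf1 : ((n - k).factorial : ℚ) = ((n : ℚ) - k) * ((n - (k + 1)).factorial : ℚ) := by
      rw [h1, Nat.factorial_succ]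
      have h3 : ((n - (k + 1) : ℕ) : ℚ) = (n : ℚ) - k - 1 := by
        rw [Nat.cast_sub hk]; push_cast; ring
      push_cast
      rw [h3]; ring
    have hf2 : ((n + (k + 1)).factorial : ℚ) = ((n : ℚ) + k + 1) * ((n + k).factorial : ℚ) := by
      rw [h2, Nat.factorial_succ]; push_cast; ring
    have hF1 : ((n - (k + 1)).factorial : ℚ) ≠ 0 := by positivity
    have hF2 : ((n + k).factorial : ℚ) ≠ 0 := by positivity
    have hn1 : (1 : ℚ) ≤ (n : ℚ) := by exact_mod_cast hn
    have hkn : (k : ℚ) ≤ (n : ℚ) - 1 := by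
      have : (k : ℚ) + 1 ≤ (n : ℚ) := by exact_mod_cast hk
      linarith
    have hd1 : 2 * (2 * (n : ℚ) - 1) ≠ 0 := by nlinarith
    have hd2 : (n : ℚ) - k ≠ 0 := by nlinarith
    have hd3 : (n : ℚ) + k + 1 ≠ 0 := by positivity
    simp only [G, hf1, hf2, Nat.add_sub_cancel, pow_succ]
    push_cast
    have hd4 : (n : ℚ) * 2 - 1 ≠ 0 := by linarith
    field_simp
    ring

theorem alt_factorial_sum_j (n : ℕ) (hn : 1 ≤ n) :
    (∑ j ∈ Finset.Icc 1 n, (-1 : ℚ) ^ (j - 1) * (j : ℚ) *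
      ((n.factorial : ℚ)) ^ 2 / (((n - j).factorial : ℚ) * ((n + j).factorial : ℚ))) =
      (n : ℚ) / (2 * (2 * (n : ℚ) - 1)) := by
  rw [key n hn n le_rfl]
  have hGn : G n n = 0 := by
    simp only [G]
    have : (n : ℚ) + (n : ℚ) * (2 * (n : ℚ) - 1) - 2 * (n : ℚ) ^ 2 = 0 := by ring
    rw [this]
    simp
  have hG0 : G n 0 = (n : ℚ) / (2 * (2 * (n : ℚ) - 1)) := by
    simp only [G]
    have hF : ((n.factorial : ℚ)) ≠ 0 := by positivity
    have hn1 : (1 : ℚ) ≤ (n : ℚ) := by exact_mod_cast hn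
    have hd : 2 * (2 * (n : ℚ) - 1) ≠ 0 := by nlinarith
    simp only [Nat.sub_zero, Nat.add_zero, pow_zero, Nat.cast_zero, one_mul]
    field_simp
    ring
  rw [hGn, hG0, sub_zero]
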